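/- If heap automata A and B over a class of symbolic heaps both satisfy the compositionality property, then the product automaton C with state space Q_A × Q_B, final states F_A × F_B, and transition relation given componentwise also satisfies the compositionality property, and the language accepted by C equals the intersection of the languages of A and B. -/

import Mathlib

namespace HeapAutomata

/-- A heap automaton over a class of symbolic heaps `SH` whose number of
predicate calls is given by `calls`. -/
structure HeapAutomaton (SH : Type) (calls : SH → ℕ) : Type 1 where
  Q : Type
  finQ : Finite Q
  Δ : List Q → SH → Q → Prop
  F : Set Q
  len_eq : ∀ qs φ q, Δ qs φ q → qs.length = calls φ

variable {SH : Type} {calls : SH → ℕ}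

/-- The language of a heap automaton: all reduced (predicate-call-free) symbolic
heaps assigned some final state. -/
def Lang (A : HeapAutomaton SH calls) : Set SH :=
  {τ | calls τ = 0 ∧ ∃ q ∈ A.F, A.Δ [] τ q}

/-- The compositionality property of heap automata, relative to the substitution
operation `subst` replacing the predicate calls of a symbolic heap by reduced
symbolic heaps. -/
def Compositional (subst : SH → List SH → SH) (A : HeapAutomaton SH calls) : Prop :=
  ∀ (p : A.Q) (φ : SH) (τs : List SH),
    (∀ τ ∈ τs, calls τ = 0) → τs.length = calls φ →
    ((∃ qs : List A.Q, A.Δ qs φ p ∧ List.Forall₂ (fun τ q => A.Δ [] τ q) τs qs) ↔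
      A.Δ [] (subst φ τs) p)


/-- The product automaton of two heap automata: state space `Q_A × Q_B`,
final states `F_A × F_B`, componentwise transitions. -/
def product (A B : HeapAutomaton SH calls) : HeapAutomaton SH calls where
  Q := A.Q × B.Q
  finQ := by haveI := A.finQ; haveI := B.finQ; infer_instance
  Δ := fun qs φ q => A.Δ (qs.map Prod.fst) φ q.1 ∧ B.Δ (qs.map Prod.snd) φ q.2
  F := A.F ×ˢ B.F
  len_eq := by
    intro qs φ q h
    simpa using A.len_eq _ _ _ h.1

/-- if heap automata `A` and `B` are compositional, then the product
automaton is compositional and accepts `L(A) ∩ L(B)`. -/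
theorem product_compositional_and_lang_inter
    (subst : SH → List SH → SH) (A B : HeapAutomaton SH calls)
    (hA : Compositional subst A) (hB : Compositional subst B) :
    Compositional subst (product A B) ∧
      Lang (product A B) = Lang A ∩ Lang B := by
  have zipfst : ∀ {α β : Type} (l1 : List α) (l2 : List β), l1.length = l2.length →
      (l1.zip l2).map Prod.fst = l1 := by
    intro α β l1 l2 h
    exact List.map_fst_zip h.le
  have zipsnd : ∀ {α β : Type} (l1 : List α) (l2 : List β), l1.length = l2.length →
      (l1.zip l2).map Prod.snd = l2 := by
    intro α β l1 l2 h
    exact List.map_snd_zip h.ge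
  constructor
  · intro p φ τs hred hlen
    constructor
    · rintro ⟨qs, ⟨hAq, hBq⟩, hf⟩
      constructor
      · refine (hA p.1 φ τs hred hlen).1 ⟨qs.map Prod.fst, hAq, ?_⟩
        clear hAq hBq hred hlen
        induction hf with
        | nil => exact List.Forall₂.nil
        | cons h _ ih => exact List.Forall₂.cons h.1 ih
      · refine (hB p.2 φ τs hred hlen).1 ⟨qs.map Prod.snd, hBq, ?_⟩
        clear hAq hBq hred hlen
        induction hf with
        | nil => exact List.Forall₂.nil
        | cons h _ ih => exact List.Forall₂.cons h.2 ih
    · rintro ⟨hAs, hBs⟩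
      obtain ⟨qsA, hAq, hfA⟩ := (hA p.1 φ τs hred hlen).2 hAs
      obtain ⟨qsB, hBq, hfB⟩ := (hB p.2 φ τs hred hlen).2 hBs
      have hl : qsA.length = qsB.length := by
        rw [← hfA.length_eq, ← hfB.length_eq]
      refine ⟨qsA.zip qsB, ⟨?_, ?_⟩, ?_⟩
      · rw [zipfst _ _ hl]; exact hAq
      · rw [zipsnd _ _ hl]; exact hBq
      · clear hAq hBq hred hlen hl hAs hBs
        induction hfA generalizing qsB with
        | nil => cases hfB; exact List.Forall₂.nil
        | cons h _ ih =>
          cases hfB with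
          | cons h' t' => exact List.Forall₂.cons ⟨h, h'⟩ (ih _ t')
  · ext τ
    constructor
    · rintro ⟨hc, q, hqF, hA0, hB0⟩
      exact ⟨⟨hc, q.1, hqF.1, by exact hA0⟩, ⟨hc, q.2, hqF.2, by exact hB0⟩⟩
    · rintro ⟨⟨hc, qa, hqa, ha⟩, ⟨_, qb, hqb, hb⟩⟩
      exact ⟨hc, (qa, qb), ⟨hqa, hqb⟩, by exact ha, by exact hb⟩

end HeapAutomata
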